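/- Let F be a field of characteristic zero. Let P ∈ F[T, x, y] and let R ∈ F[x] be a polynomial of degree at most d such that P(T, x, R(x)) is identically zero and (∂P/∂y)(T, 0, R(0)) is a nonzero polynomial in F[T]. Then there exist κ ∈ F and a (d+1)-variate polynomial Q(u_0, …, u_d) ∈ F[u_0, …, u_d] of degree at most d such that R(x) ≡ Q(h_0(κ, x), h_1(κ, x), …, h_d(κ, x)) mod ⟨x⟩^{d+1}, where for every i ∈ {0, 1, …, d} the polynomial h_i(T, x) is defined as h_i(T, x) := ((∂^i P/∂y^i)(T, x, R(0)) − (∂^i P/∂y^i)(T, 0, R(0))) trunc ⟨x⟩^{d+1}, with ∂^i P/∂y^i denoting the i-th order partial derivative of P with respect to y. -/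

import Mathlib

/-!
Lemma `CKS-updated-rational-in-T`: a low-degree root `R(x)` of `P(T, x, y)` is,
modulo `⟨x⟩^{d+1}`, a low-degree composition of the truncated shifted partial
derivatives `h_i(κ, x)`.

`P ∈ F[T, x, y]` is represented as `Polynomial (Polynomial (MvPolynomial (Fin n) F))`,
with `y` the outer variable and `T` the inner one, and `R ∈ F[x]` as
`MvPolynomial (Fin n) F`.  Truncation `trunc ⟨x⟩^{d+1}` keeps all monomials of
`x`-degree at most `d`; it is realized via homogeneous components, applied to each
`T`-coefficient.
-/

noncomputable section

/-- Truncation of an `MvPolynomial` to total degree at most `d`. -/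
def truncX {F : Type*} [Field F] {n : ℕ} (d : ℕ) (p : MvPolynomial (Fin n) F) :
    MvPolynomial (Fin n) F :=
  ∑ i ∈ Finset.range (d + 1), MvPolynomial.homogeneousComponent i p

/-- Coefficientwise truncation of an element of `F[T, x]` to `x`-degree at most `d`. -/
def polyTruncX {F : Type*} [Field F] {n : ℕ} (d : ℕ)
    (q : Polynomial (MvPolynomial (Fin n) F)) : Polynomial (MvPolynomial (Fin n) F) :=
  ∑ j ∈ q.support, Polynomial.monomial j (truncX d (q.coeff j))

namespace CKSAux

lemma finsuppProd_mem_pow {σ : Type*} {S : Type*} [CommRing S] (J : Ideal S)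
    (V : σ → S) (hV : ∀ j, V j ∈ J) (m : σ →₀ ℕ) :
    (m.prod fun j e => V j ^ e) ∈ J ^ (m.sum fun _ e => e) := by
  induction m using Finsupp.induction with
  | zero => simp
  | single_add a b f ha hb ih =>
    rw [Finsupp.prod_add_index' (fun _ => pow_zero _) (fun _ _ _ => pow_add _ _ _),
      Finsupp.sum_add_index' (fun _ => rfl) (fun _ _ _ => rfl),
      pow_add]
    have h1 : ((Finsupp.single a b).prod fun j e => V j ^ e) = V a ^ b :=
      Finsupp.prod_single_index (pow_zero _)
    have h2 : ((Finsupp.single a b).sum fun _ e => e) = b := Finsupp.sum_single_index rfl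
    rw [h1, h2]
    exact Ideal.mul_mem_mul (Ideal.pow_mem_pow (hV a) b) ih

lemma aeval_mem_pow {F : Type*} [CommRing F] {σ : Type*} {S : Type*} [CommRing S] [Algebra F S]
    (J : Ideal S) (V : σ → S) (hV : ∀ j, V j ∈ J) (p : MvPolynomial σ F) (t : ℕ)
    (hp : ∀ m ∈ p.support, t ≤ m.sum fun _ e => e) :
    MvPolynomial.aeval V p ∈ J ^ t := by
  rw [p.as_sum, map_sum]
  refine Ideal.sum_mem _ fun m hm => ?_
  rw [MvPolynomial.aeval_monomial]
  exact Ideal.mul_mem_left _ _ (Ideal.pow_le_pow_right (hp m hm) (finsuppProd_mem_pow J V hV m))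

end CKSAux

namespace CKSAux

variable {F : Type*} [Field F]

lemma coeff_truncSum {σ : Type*} (t : ℕ) (q : MvPolynomial σ F) (m : σ →₀ ℕ) :
    MvPolynomial.coeff m (∑ i ∈ Finset.range (t + 1), MvPolynomial.homogeneousComponent i q) =
      if (m.sum fun _ e => e) ≤ t then MvPolynomial.coeff m q else 0 := by
  classical
  rw [MvPolynomial.coeff_sum]
  simp only [MvPolynomial.coeff_homogeneousComponent]
  have hdeg : m.degree = m.sum fun _ e => e := rfl
  rw [show (∑ i ∈ Finset.range (t + 1), if m.degree = i then MvPolynomial.coeff m q else 0) =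
      if m.degree ∈ Finset.range (t + 1) then MvPolynomial.coeff m q else 0 from
    Finset.sum_ite_eq (Finset.range (t + 1)) m.degree (fun _ => MvPolynomial.coeff m q)]
  rw [hdeg] at *
  simp [Finset.mem_range, Nat.lt_succ_iff]

lemma sub_truncSum_support {σ : Type*} (t : ℕ) (q : MvPolynomial σ F) :
    ∀ m ∈ (q - ∑ i ∈ Finset.range (t + 1), MvPolynomial.homogeneousComponent i q).support,
      t + 1 ≤ m.sum fun _ e => e := by
  intro m hm
  rw [MvPolynomial.mem_support_iff, MvPolynomial.coeff_sub, coeff_truncSum] at hm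
  by_contra hc
  push_neg at hc
  rw [if_pos (by omega)] at hm
  simp at hm

lemma aeval_sub_truncSum_mem {σ : Type*} {S : Type*} [CommRing S] [Algebra F S]
    (J : Ideal S) (V : σ → S) (hV : ∀ j, V j ∈ J) (t : ℕ) (q : MvPolynomial σ F) :
    MvPolynomial.aeval V q -
      MvPolynomial.aeval V (∑ i ∈ Finset.range (t + 1), MvPolynomial.homogeneousComponent i q) ∈
        J ^ (t + 1) := by
  rw [← map_sub]
  exact aeval_mem_pow J V hV _ (t + 1) (sub_truncSum_support t q)

lemma totalDegree_truncSum {σ : Type*} (t : ℕ) (q : MvPolynomial σ F) :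
    (∑ i ∈ Finset.range (t + 1), MvPolynomial.homogeneousComponent i q).totalDegree ≤ t := by
  refine le_trans (MvPolynomial.totalDegree_finset_sum _ _) (Finset.sup_le fun i hi => ?_)
  rw [Finset.mem_range] at hi
  refine le_trans (Finset.sup_le fun m hm => ?_) (Nat.lt_succ_iff.mp hi)
  rw [MvPolynomial.mem_support_iff, MvPolynomial.coeff_homogeneousComponent] at hm
  by_contra hc
  rw [if_neg (by intro he; exact hc (le_of_eq he))] at hm
  exact hm rfl

lemma mem_span_range_X {n : ℕ} (p : MvPolynomial (Fin n) F)
    (hp : MvPolynomial.eval (0 : Fin n → F) p = 0) :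
    p ∈ Ideal.span (Set.range (MvPolynomial.X : Fin n → MvPolynomial (Fin n) F)) := by
  have h := aeval_mem_pow (Ideal.span (Set.range (MvPolynomial.X : Fin n → MvPolynomial (Fin n) F)))
    MvPolynomial.X (fun j => Ideal.subset_span ⟨j, rfl⟩) p 1 ?_
  · rw [MvPolynomial.aeval_X_left_apply, pow_one] at h
    exact h
  · intro m hm
    by_contra hc
    push_neg at hc
    have hm0 : m = 0 := by
      have : m.degree = 0 := by
        have : (m.sum fun _ e => e) = 0 := by omega
        exact this
      exact (Finsupp.degree_eq_zero_iff m).mp this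
    rw [MvPolynomial.mem_support_iff, hm0] at hm
    rw [MvPolynomial.eval_zero] at hp
    exact hm (by rw [← MvPolynomial.constantCoeff_eq] at *; exact hp)

lemma pow_sub_pow_mem {S : Type*} [CommRing S] (I J : Ideal S) {a b : S}
    (ha : a ∈ I) (hb : b ∈ I) (hab : a - b ∈ J) :
    ∀ i : ℕ, a ^ (i + 1) - b ^ (i + 1) ∈ J * I ^ i := by
  intro i
  induction i with
  | zero => simpa [Ideal.mul_top] using hab
  | succ i ih =>
    have key : a ^ (i + 2) - b ^ (i + 2) =
        a * (a ^ (i + 1) - b ^ (i + 1)) + (a - b) * b ^ (i + 1) := by ring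
    rw [key]
    refine Submodule.add_mem _ ?_ ?_
    · have : (a ^ (i + 1) - b ^ (i + 1)) * a ∈ (J * I ^ i) * I := Ideal.mul_mem_mul ih ha
      rw [mul_assoc, ← pow_succ] at this
      rw [mul_comm a (a ^ (i + 1) - b ^ (i + 1))]
      exact this
    · exact Ideal.mul_mem_mul hab (Ideal.pow_mem_pow hb (i + 1))

end CKSAux

namespace CKSAux

variable {F : Type*} [Field F]

lemma truncX_sub_mem {n : ℕ} (d : ℕ) (p : MvPolynomial (Fin n) F) :
    truncX d p - p ∈
      (Ideal.span (Set.range (MvPolynomial.X : Fin n → MvPolynomial (Fin n) F))) ^ (d + 1) := by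
  have h := aeval_sub_truncSum_mem
    (Ideal.span (Set.range (MvPolynomial.X : Fin n → MvPolynomial (Fin n) F)))
    (MvPolynomial.X : Fin n → MvPolynomial (Fin n) F)
    (fun j => Ideal.subset_span ⟨j, rfl⟩) d p
  rw [MvPolynomial.aeval_X_left_apply, MvPolynomial.aeval_X_left_apply] at h
  have := neg_mem h
  simpa [truncX, neg_sub] using this

lemma polyTruncX_eval_sub {n : ℕ} (d : ℕ) (q : Polynomial (MvPolynomial (Fin n) F))
    (a : MvPolynomial (Fin n) F) :
    Polynomial.eval a (polyTruncX d q) - Polynomial.eval a q ∈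
      (Ideal.span (Set.range (MvPolynomial.X : Fin n → MvPolynomial (Fin n) F))) ^ (d + 1) := by
  rw [polyTruncX, Polynomial.eval_finset_sum]
  simp only [Polynomial.eval_monomial]
  rw [Polynomial.eval_eq_sum, Polynomial.sum, ← Finset.sum_sub_distrib]
  refine Ideal.sum_mem _ fun j hj => ?_
  have h := Ideal.mul_mem_right (a ^ j) _ (truncX_sub_mem d (q.coeff j))
  simpa [sub_mul] using h

end CKSAux

theorem stmt_5 {F : Type*} [Field F] [CharZero F] {n : ℕ} (d : ℕ)
    (P : Polynomial (Polynomial (MvPolynomial (Fin n) F)))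
    (R : MvPolynomial (Fin n) F) (hRdeg : R.totalDegree ≤ d)
    -- `P(T, x, R(x)) ≡ 0`:
    (hroot : P.eval (Polynomial.C R) = 0)
    -- `(∂P/∂y)(T, 0, R(0))` is a nonzero polynomial in `F[T]`:
    (hnd : (((Polynomial.derivative P).eval
        (Polynomial.C (MvPolynomial.C (MvPolynomial.eval (0 : Fin n → F) R)))).map
        (MvPolynomial.eval (0 : Fin n → F))) ≠ 0)
    -- `h i = ((∂^i P/∂y^i)(T, x, R(0)) − (∂^i P/∂y^i)(T, 0, R(0))) trunc ⟨x⟩^{d+1}`: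
    (h : ℕ → Polynomial (MvPolynomial (Fin n) F))
    (hh : ∀ i : ℕ, h i = polyTruncX d
      ((((fun q => Polynomial.derivative q)^[i] P).eval
          (Polynomial.C (MvPolynomial.C (MvPolynomial.eval (0 : Fin n → F) R)))) -
        ((((fun q => Polynomial.derivative q)^[i] P).eval
            (Polynomial.C (MvPolynomial.C (MvPolynomial.eval (0 : Fin n → F) R)))).map
          ((MvPolynomial.C : F →+* MvPolynomial (Fin n) F).comp
            (MvPolynomial.eval (0 : Fin n → F)))))) :
    ∃ (κ : F) (Q : MvPolynomial (Fin (d + 1)) F), Q.totalDegree ≤ d ∧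
      R - MvPolynomial.aeval
          (fun i : Fin (d + 1) => Polynomial.eval (MvPolynomial.C κ) (h i)) Q ∈
        (Ideal.span (Set.range (MvPolynomial.X : Fin n → MvPolynomial (Fin n) F))) ^ (d + 1) := by
  classical
  obtain ⟨κ, hκ⟩ : ∃ κ : F, Polynomial.eval κ (((Polynomial.derivative P).eval
      (Polynomial.C (MvPolynomial.C (MvPolynomial.eval (0 : Fin n → F) R)))).map
      (MvPolynomial.eval (0 : Fin n → F))) ≠ 0 := by
    by_contra hc
    push_neg at hc
    exact hnd (Polynomial.zero_of_eval_zero _ hc)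
  refine ⟨κ, ?_⟩
  set I : Ideal (MvPolynomial (Fin n) F) :=
    Ideal.span (Set.range (MvPolynomial.X : Fin n → MvPolynomial (Fin n) F)) with hI
  set π₀ : MvPolynomial (Fin n) F →+* MvPolynomial (Fin n) F :=
    (MvPolynomial.C : F →+* MvPolynomial (Fin n) F).comp
      (MvPolynomial.eval (0 : Fin n → F)) with hπ₀
  set r : Polynomial (MvPolynomial (Fin n) F) :=
    Polynomial.C (MvPolynomial.C (MvPolynomial.eval (0 : Fin n → F) R)) with hr
  set b : ℕ → MvPolynomial (Fin n) F := fun i =>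
    Polynomial.eval (MvPolynomial.C κ) ((Polynomial.hasseDeriv i P).eval r) with hb
  set γ : ℕ → F := fun i => MvPolynomial.eval (0 : Fin n → F) (b i) with hγ
  set g : ℕ → MvPolynomial (Fin n) F := fun i => b i - MvPolynomial.C (γ i) with hg
  set S : MvPolynomial (Fin n) F :=
    R - MvPolynomial.C (MvPolynomial.eval (0 : Fin n → F) R) with hS
  set V : Fin (d + 1) → MvPolynomial (Fin n) F := fun j =>
    Polynomial.eval (MvPolynomial.C κ) (h (j : ℕ)) with hV
  set e : ℕ → F := fun i => ((Nat.factorial i : F))⁻¹ with he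
  have hSI : S ∈ I := CKSAux.mem_span_range_X _ (by simp [hS])
  have hgI : ∀ i, g i ∈ I := fun i => CKSAux.mem_span_range_X _ (by simp [hg, hγ])
  have EQN : ∀ m : ℕ, P.natDegree < m → (∑ i ∈ Finset.range m, b i * S ^ i) = 0 := by
    intro m hm
    have hB : (∑ i ∈ Finset.range m,
        ((Polynomial.hasseDeriv i P).eval r) * (Polynomial.C R - r) ^ i) = 0 := by
      have h1 : (Polynomial.taylor r P).eval (Polynomial.C R - r) = 0 := by
        rw [Polynomial.taylor_eval, sub_add_cancel, hroot]
      rw [Polynomial.eval_eq_sum_range'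
        (by rw [Polynomial.natDegree_taylor]; exact hm)] at h1
      simpa only [Polynomial.taylor_coeff] using h1
    have h2 := congrArg (Polynomial.eval (MvPolynomial.C κ)) hB
    rw [Polynomial.eval_finset_sum] at h2
    simpa [hb, hS, hr] using h2
  have evswap : ∀ (f : MvPolynomial (Fin n) F →+* MvPolynomial (Fin n) F)
      (W : Polynomial (MvPolynomial (Fin n) F)), f (MvPolynomial.C κ) = MvPolynomial.C κ →
      Polynomial.eval (MvPolynomial.C κ) (W.map f) =
        f (Polynomial.eval (MvPolynomial.C κ) W) := by
    intro f W hf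
    rw [Polynomial.eval_map]
    have h3 := Polynomial.eval₂_hom (p := W) f (MvPolynomial.C κ)
    rw [hf] at h3
    exact h3
  have hγ1 : γ 1 ≠ 0 := by
    have heq : γ 1 = Polynomial.eval κ
        (((Polynomial.derivative P).eval r).map (MvPolynomial.eval (0 : Fin n → F))) := by
      rw [Polynomial.eval_map]
      have h3 := Polynomial.eval₂_hom
        (p := (Polynomial.derivative P).eval r)
        (MvPolynomial.eval (0 : Fin n → F) : MvPolynomial (Fin n) F →+* F)
        (MvPolynomial.C κ)
      rw [MvPolynomial.eval_C] at h3
      rw [h3]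
      simp [hγ, hb, Polynomial.hasseDeriv_one']
    rw [heq]
    exact hκ
  have hγ0 : γ 0 = 0 := by
    have h0 := congrArg (MvPolynomial.eval (0 : Fin n → F)) (EQN (P.natDegree + 1)
      (Nat.lt_succ_self _))
    rw [map_sum] at h0
    simp only [map_mul, map_pow] at h0
    have hs0 : MvPolynomial.eval (0 : Fin n → F) S = 0 := by simp [hS]
    rw [hs0, Finset.sum_eq_single 0 (fun i _ hi => by simp [zero_pow hi])
      (fun habs => absurd (Finset.mem_range.mpr (Nat.succ_pos _)) habs)] at h0
    simpa [hγ] using h0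
  have hVg : ∀ i : ℕ, (hi : i ≤ d) → V ⟨i, by omega⟩ -
      (Nat.factorial i : MvPolynomial (Fin n) F) * g i ∈ I ^ (d + 1) := by
    intro i hi
    have hWh := hh i
    have stepA : V ⟨i, by omega⟩ - Polynomial.eval (MvPolynomial.C κ)
        ((((fun q => Polynomial.derivative q)^[i] P).eval r) -
          ((((fun q => Polynomial.derivative q)^[i] P).eval r).map π₀)) ∈ I ^ (d + 1) := by
      have hstep := CKSAux.polyTruncX_eval_sub d
        ((((fun q => Polynomial.derivative q)^[i] P).eval r) -
          ((((fun q => Polynomial.derivative q)^[i] P).eval r).map π₀)) (MvPolynomial.C κ)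
      rw [← hWh] at hstep
      simpa [hV] using hstep
    have stepC : Polynomial.eval (MvPolynomial.C κ)
        (((fun q => Polynomial.derivative q)^[i] P).eval r) =
        (Nat.factorial i : MvPolynomial (Fin n) F) * b i := by
      have hD : ((fun q => Polynomial.derivative q)^[i] P) =
          (Nat.factorial i) • (Polynomial.hasseDeriv i P) := by
        calc (fun q => Polynomial.derivative q)^[i] P
            = (⇑(Polynomial.derivative (R := Polynomial (MvPolynomial (Fin n) F))))^[i] P := rfl
          _ = (Nat.factorial i • Polynomial.hasseDeriv i) P := by
              rw [Polynomial.factorial_smul_hasseDeriv]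
          _ = Nat.factorial i • (Polynomial.hasseDeriv i P) := rfl
      rw [hD, nsmul_eq_mul, Polynomial.eval_mul, Polynomial.eval_natCast,
        Polynomial.eval_mul, Polynomial.eval_natCast]
    have stepB : Polynomial.eval (MvPolynomial.C κ)
        ((((fun q => Polynomial.derivative q)^[i] P).eval r).map π₀) =
        π₀ (Polynomial.eval (MvPolynomial.C κ)
          (((fun q => Polynomial.derivative q)^[i] P).eval r)) :=
      evswap π₀ _ (by simp [hπ₀])
    have hval : Polynomial.eval (MvPolynomial.C κ)
        ((((fun q => Polynomial.derivative q)^[i] P).eval r) -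
          ((((fun q => Polynomial.derivative q)^[i] P).eval r).map π₀)) =
        (Nat.factorial i : MvPolynomial (Fin n) F) * g i := by
      rw [Polynomial.eval_sub, stepB, stepC, hg]
      rw [map_mul, map_natCast]
      have hπb : π₀ (b i) = MvPolynomial.C (γ i) := by simp [hπ₀, hγ]
      rw [hπb, mul_sub]
    rw [← hval]
    exact stepA
  have hVI : ∀ j : Fin (d + 1), V j ∈ I := by
    intro j
    have h1 := hVg (j : ℕ) (by omega)
    have h2 : (⟨(j : ℕ), by omega⟩ : Fin (d + 1)) = j := by
      apply Fin.ext; rfl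
    rw [h2] at h1
    have h3 : V j - (Nat.factorial (j : ℕ) : MvPolynomial (Fin n) F) * g (j : ℕ) ∈ I := by
      have h4 := Ideal.pow_le_pow_right (show 1 ≤ d + 1 by omega) h1
      rwa [pow_one] at h4
    have h5 : (Nat.factorial (j : ℕ) : MvPolynomial (Fin n) F) * g (j : ℕ) ∈ I :=
      Ideal.mul_mem_left _ _ (hgI _)
    have h6 := add_mem h3 h5
    rwa [sub_add_cancel] at h6
  have hcong : ∀ i : ℕ, (hi : i ≤ d) →
      g i - MvPolynomial.C (e i) * V ⟨i, by omega⟩ ∈ I ^ (d + 1) := by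
    intro i hi
    have h1 := hVg i hi
    have hfac : MvPolynomial.C (e i) * (Nat.factorial i : MvPolynomial (Fin n) F) = 1 := by
      rw [show ((Nat.factorial i : MvPolynomial (Fin n) F)) =
          MvPolynomial.C ((Nat.factorial i : F)) from
        (map_natCast (MvPolynomial.C : F →+* MvPolynomial (Fin n) F) _).symm,
        ← map_mul, he]
      simp [inv_mul_cancel₀ (show ((Nat.factorial i : F)) ≠ 0 from
        Nat.cast_ne_zero.mpr (Nat.factorial_ne_zero i))]
    have h2 : g i - MvPolynomial.C (e i) * V ⟨i, by omega⟩ =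
        (-(MvPolynomial.C (e i))) * (V ⟨i, by omega⟩ -
          (Nat.factorial i : MvPolynomial (Fin n) F) * g i) := by
      have h3 : MvPolynomial.C (e i) * ((Nat.factorial i : MvPolynomial (Fin n) F) * g i)
          = g i := by rw [← mul_assoc, hfac, one_mul]
      have h4 : (-(MvPolynomial.C (e i))) * (V ⟨i, by omega⟩ -
          (Nat.factorial i : MvPolynomial (Fin n) F) * g i) =
          -(MvPolynomial.C (e i) * V ⟨i, by omega⟩) +
            MvPolynomial.C (e i) * ((Nat.factorial i : MvPolynomial (Fin n) F) * g i) := by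
        ring
      rw [h4, h3]
      ring
    rw [h2]
    exact Ideal.mul_mem_left _ _ h1
  have key : ∀ k : ℕ, k ≤ d → ∃ Q : MvPolynomial (Fin (d + 1)) F,
      Q.totalDegree ≤ k ∧ S - MvPolynomial.aeval V Q ∈ I ^ (k + 1) := by
    intro k
    induction k with
    | zero =>
      intro _
      refine ⟨0, by simp, ?_⟩
      rw [map_zero, sub_zero, zero_add, pow_one]
      exact hSI
    | succ k ih =>
      intro hk
      obtain ⟨Qk, hQkdeg, hQkmem⟩ := ih (by omega)
      set σp : MvPolynomial (Fin n) F := MvPolynomial.aeval V Qk with hσp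
      have hσI : σp ∈ I := by
        have h1 : S - σp ∈ I := by
          have h2 := Ideal.pow_le_pow_right (show 1 ≤ k + 1 by omega) hQkmem
          rwa [pow_one] at h2
        have h3 := sub_mem hSI h1
        simpa using h3
      set m : ℕ := max (P.natDegree + 1) (k + 2) with hm
      have hm1 : P.natDegree < m := by omega
      have hm2 : k + 2 ≤ m := by omega
      have hEq := EQN m hm1
      rw [Finset.range_eq_Ico, Finset.sum_eq_sum_Ico_succ_bot (by omega : 0 < m),
        Finset.sum_eq_sum_Ico_succ_bot (by omega : 0 + 1 < m),
        ← Finset.sum_Ico_consecutive (fun i => b i * S ^ i)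
          (by omega : 0 + 1 + 1 ≤ k + 2) hm2] at hEq
      norm_num at hEq
      set idx : ℕ → Fin (d + 1) := fun i => ⟨min i d, by omega⟩ with hidx
      have hVidx : ∀ i : ℕ, (hi : i ≤ d) → V (idx i) = V ⟨i, by omega⟩ := by
        intro i hi
        congr 1
        exact Fin.ext (by simp [hidx, min_eq_left hi])
      have hcong' : ∀ i : ℕ, (hi : i ≤ d) →
          g i - MvPolynomial.C (e i) * V (idx i) ∈ I ^ (d + 1) := by
        intro i hi
        rw [hVidx i hi]
        exact hcong i hi
      set Q' : MvPolynomial (Fin (d + 1)) F :=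
        MvPolynomial.C (-(γ 1)⁻¹) *
          (MvPolynomial.C (e 0) * MvPolynomial.X (idx 0) +
            MvPolynomial.C (e 1) * MvPolynomial.X (idx 1) * Qk +
            ∑ i ∈ Finset.Ico 2 (k + 2),
              (MvPolynomial.C (γ i) + MvPolynomial.C (e i) * MvPolynomial.X (idx i)) * Qk ^ i)
        with hQ'
      set T : MvPolynomial (Fin n) F :=
        MvPolynomial.C (e 0) * V (idx 0) +
          MvPolynomial.C (e 1) * V (idx 1) * σp +
          ∑ i ∈ Finset.Ico 2 (k + 2),
            (MvPolynomial.C (γ i) + MvPolynomial.C (e i) * V (idx i)) * σp ^ i with hT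
      have haeQ' : MvPolynomial.aeval V Q' = MvPolynomial.C (-(γ 1)⁻¹) * T := by
        simp only [hQ', hT, map_mul, map_add, map_sum, map_pow,
          MvPolynomial.aeval_C, MvPolynomial.aeval_X, MvPolynomial.algebraMap_eq, hσp]
      have hSub : σp - S ∈ I ^ (k + 1) := by
        have h1 := neg_mem hQkmem; rwa [neg_sub] at h1
      have hpowdiff : ∀ i : ℕ, 2 ≤ i → σp ^ i - S ^ i ∈ I ^ (k + 2) := by
        intro i hi2
        obtain ⟨j, rfl⟩ : ∃ j, i = j + 1 := ⟨i - 1, by omega⟩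
        have h1 := CKSAux.pow_sub_pow_mem I (I ^ (k + 1)) hσI hSI hSub j
        rw [show (I ^ (k + 1)) * I ^ j = I ^ (k + 1 + j) from (pow_add I (k + 1) j).symm] at h1
        exact Ideal.pow_le_pow_right (by omega) h1
      have mA1 : MvPolynomial.C (e 0) * V (idx 0) - g 0 ∈ I ^ (k + 2) := by
        have h1 := neg_mem (hcong' 0 (by omega))
        rw [neg_sub] at h1
        exact Ideal.pow_le_pow_right (by omega) h1
      have mA2 : (MvPolynomial.C (e 1) * V (idx 1) - g 1) * σp + g 1 * (σp - S) ∈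
          I ^ (k + 2) := by
        refine add_mem ?_ ?_
        · have h1 := neg_mem (hcong' 1 (by omega))
          rw [neg_sub] at h1
          exact Ideal.pow_le_pow_right (by omega) (Ideal.mul_mem_right _ _ h1)
        · have h1 : g 1 * (σp - S) ∈ I * I ^ (k + 1) := Ideal.mul_mem_mul (hgI 1) hSub
          rwa [← pow_succ'] at h1
      have mA3 : ∀ i ∈ Finset.Ico 2 (k + 2),
          (MvPolynomial.C (γ i) + MvPolynomial.C (e i) * V (idx i)) * σp ^ i - b i * S ^ i ∈
            I ^ (k + 2) := by
        intro i hiI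
        rw [Finset.mem_Ico] at hiI
        have hid : i ≤ d := by omega
        have hbi : b i = MvPolynomial.C (γ i) + g i := by simp [hg]
        have hsplit : (MvPolynomial.C (γ i) + MvPolynomial.C (e i) * V (idx i)) * σp ^ i -
            b i * S ^ i =
            MvPolynomial.C (γ i) * (σp ^ i - S ^ i) +
              (MvPolynomial.C (e i) * V (idx i) - g i) * σp ^ i +
              g i * (σp ^ i - S ^ i) := by
          rw [hbi]; ring
        rw [hsplit]
        refine add_mem (add_mem ?_ ?_) ?_
        · exact Ideal.mul_mem_left _ _ (hpowdiff i hiI.1)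
        · have h1 := neg_mem (hcong' i hid)
          rw [neg_sub] at h1
          exact Ideal.pow_le_pow_right (by omega) (Ideal.mul_mem_right _ _ h1)
        · exact Ideal.mul_mem_left _ _ (hpowdiff i hiI.1)
      have mA4 : ∀ i ∈ Finset.Ico (k + 2) m, b i * S ^ i ∈ I ^ (k + 2) := by
        intro i hiI
        rw [Finset.mem_Ico] at hiI
        exact Ideal.mul_mem_left _ _
          (Ideal.pow_le_pow_right (by omega) (Ideal.pow_mem_pow hSI i))
      have hTm : MvPolynomial.C (γ 1) * S + T ∈ I ^ (k + 2) := by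
        have hb0 : b 0 = g 0 := by simp [hg, hγ0]
        have hb1 : b 1 = MvPolynomial.C (γ 1) + g 1 := by simp [hg]
        have hsum3 := Ideal.sum_mem (I ^ (k + 2)) mA3
        have hsum4 := Ideal.sum_mem (I ^ (k + 2)) mA4
        have hsplitall : MvPolynomial.C (γ 1) * S + T =
            (MvPolynomial.C (e 0) * V (idx 0) - g 0) +
            ((MvPolynomial.C (e 1) * V (idx 1) - g 1) * σp + g 1 * (σp - S)) +
            (∑ i ∈ Finset.Ico 2 (k + 2),
              ((MvPolynomial.C (γ i) + MvPolynomial.C (e i) * V (idx i)) * σp ^ i -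
                b i * S ^ i)) +
            (-(∑ i ∈ Finset.Ico (k + 2) m, b i * S ^ i)) := by
          rw [hT, Finset.sum_sub_distrib]
          linear_combination hEq - hb0 - S * hb1
        rw [hsplitall]
        exact add_mem (add_mem (add_mem mA1 mA2) hsum3) (neg_mem hsum4)
      have hCinv : MvPolynomial.C ((γ 1)⁻¹) * MvPolynomial.C (γ 1) =
          (1 : MvPolynomial (Fin n) F) := by
        rw [← map_mul, inv_mul_cancel₀ hγ1, map_one]
      have hcalc : S - MvPolynomial.aeval V Q' =
          MvPolynomial.C ((γ 1)⁻¹) * (MvPolynomial.C (γ 1) * S + T) := by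
        rw [haeQ', map_neg]
        linear_combination -S * hCinv
      have hSQ' : S - MvPolynomial.aeval V Q' ∈ I ^ (k + 2) := by
        rw [hcalc]; exact Ideal.mul_mem_left _ _ hTm
      refine ⟨∑ i ∈ Finset.range (k + 1 + 1), MvPolynomial.homogeneousComponent i Q', ?_, ?_⟩
      · exact CKSAux.totalDegree_truncSum (k + 1) Q'
      · have htr := CKSAux.aeval_sub_truncSum_mem I V hVI (k + 1) Q'
        have hfin := add_mem hSQ' htr
        rwa [sub_add_sub_cancel] at hfin
  obtain ⟨Qd, hQdeg, hQmem⟩ := key d le_rfl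
  refine ⟨Qd + MvPolynomial.C (MvPolynomial.eval (0 : Fin n → F) R), ?_, ?_⟩
  · refine le_trans (MvPolynomial.totalDegree_add _ _) ?_
    rw [MvPolynomial.totalDegree_C]
    exact max_le hQdeg (Nat.zero_le d)
  · have heq : R - MvPolynomial.aeval V
        (Qd + MvPolynomial.C (MvPolynomial.eval (0 : Fin n → F) R)) =
        S - MvPolynomial.aeval V Qd := by
      rw [map_add, MvPolynomial.aeval_C, MvPolynomial.algebraMap_eq, hS]
      ring
    rw [heq]
    exact hQmem
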